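/- Let ρ, σ be density matrices on ℂⁿ with supp(ρ) ⊆ supp(σ). Then lim_{α → ∞} D̃_α(ρ‖σ) = log inf{λ > 0 : ρ ≤ λσ}, i.e., the sandwiched Rényi relative α-entropy converges to the relative max-entropy as α → ∞. -/

import Mathlib

open Matrix
open scoped ComplexOrder

/-- Real power of a Hermitian matrix via the spectral theorem (junk value `0` if not
Hermitian). Powers are taken on the support: zero eigenvalues are sent to `0 ^ t`. -/
noncomputable def Matrix.rpowH {m : Type*} [Fintype m] [DecidableEq m]
    (A : Matrix m m ℂ) (t : ℝ) : Matrix m m ℂ :=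
  if hA : A.IsHermitian then
    (hA.eigenvectorUnitary : Matrix m m ℂ) *
      Matrix.diagonal (fun i => ((hA.eigenvalues i ^ t : ℝ) : ℂ)) *
      star (hA.eigenvectorUnitary : Matrix m m ℂ)
  else 0

/-- The sandwiched Rényi relative `α`-entropy
`D̃_α(ρ‖σ) = (α-1)⁻¹ log Tr[(σ^((1-α)/(2α)) ρ σ^((1-α)/(2α)))^α]`. -/
noncomputable def sandwichedRenyi {m : Type*} [Fintype m] [DecidableEq m]
    (α : ℝ) (ρ σ : Matrix m m ℂ) : ℝ :=
  (α - 1)⁻¹ *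
    Real.log (Matrix.trace
      (Matrix.rpowH (Matrix.rpowH σ ((1 - α) / (2 * α)) * ρ *
        Matrix.rpowH σ ((1 - α) / (2 * α))) α)).re

section SRhelpSection
lemma conj_mul_conj (U : Matrix (Fin n) (Fin n) ℂ) (hU : star U * U = 1)
    (a b : Fin n → ℂ) :
    (U * diagonal a * star U) * (U * diagonal b * star U)
      = U * diagonal (fun i => a i * b i) * star U := by
  have h : diagonal a * (star U * U) * diagonal b = diagonal (fun i => a i * b i) := by
    rw [hU, mul_one, diagonal_mul_diagonal]
  calc (U * diagonal a * star U) * (U * diagonal b * star U)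
      = U * (diagonal a * (star U * U) * diagonal b) * star U := by noncomm_ring
    _ = _ := by rw [h]

lemma quadform_diag (U : Matrix (Fin n) (Fin n) ℂ) (d : Fin n → ℂ) (v : Fin n → ℂ) :
    dotProduct (star v) ((U * diagonal d * star U) *ᵥ v)
      = ∑ i, d i * Complex.normSq ((star U *ᵥ v) i) := by
  have h1 : (U * diagonal d * star U) *ᵥ v = U *ᵥ (diagonal d *ᵥ (star U *ᵥ v)) := by
    simp [mulVec_mulVec, Matrix.mul_assoc]
  rw [h1, dotProduct_mulVec]
  have h2 : star v ᵥ* U = star (star U *ᵥ v) := by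
    rw [star_mulVec, star_eq_conjTranspose, conjTranspose_conjTranspose]
  rw [h2]
  set w := star U *ᵥ v
  simp only [dotProduct, mulVec_diagonal, Pi.star_apply]
  congr 1; ext i
  have : (starRingEnd ℂ) (w i) * (d i * w i) = d i * ((starRingEnd ℂ) (w i) * w i) := by ring
  rw [RCLike.star_def, this, Complex.normSq_eq_conj_mul_self]

namespace SRhelp

variable {σ : Matrix (Fin n) (Fin n) ℂ}

/-- conjugation of a real diagonal by the eigenvector unitary of `σ`. -/
noncomputable def Hd (hσ : σ.IsHermitian) (d : Fin n → ℝ) : Matrix (Fin n) (Fin n) ℂ :=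
  (hσ.eigenvectorUnitary : Matrix (Fin n) (Fin n) ℂ) *
    diagonal (fun i => ((d i : ℝ) : ℂ)) * star (hσ.eigenvectorUnitary : Matrix (Fin n) (Fin n) ℂ)

lemma star_mul_selfU (hσ : σ.IsHermitian) :
    star (hσ.eigenvectorUnitary : Matrix (Fin n) (Fin n) ℂ) *
    (hσ.eigenvectorUnitary : Matrix (Fin n) (Fin n) ℂ) = 1 :=
  Matrix.mem_unitaryGroup_iff'.mp (hσ.eigenvectorUnitary).2

lemma mul_self_starU (hσ : σ.IsHermitian) :
    (hσ.eigenvectorUnitary : Matrix (Fin n) (Fin n) ℂ) *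
    star (hσ.eigenvectorUnitary : Matrix (Fin n) (Fin n) ℂ) = 1 :=
  Matrix.mem_unitaryGroup_iff.mp (hσ.eigenvectorUnitary).2

lemma Hd_mul (hσ : σ.IsHermitian) (a b : Fin n → ℝ) :
    Hd hσ a * Hd hσ b = Hd hσ (fun i => a i * b i) := by
  unfold Hd
  rw [conj_mul_conj _ (star_mul_selfU hσ)]
  congr 1; congr 1; congr 1; ext i; push_cast; ring

lemma Hd_herm (hσ : σ.IsHermitian) (d : Fin n → ℝ) : (Hd hσ d).IsHermitian := by
  unfold Hd Matrix.IsHermitian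
  simp only [conjTranspose_mul, star_eq_conjTranspose, conjTranspose_conjTranspose,
    diagonal_conjTranspose]
  have : star (fun i => ((d i : ℝ) : ℂ)) = fun i => ((d i : ℝ) : ℂ) := by
    ext i; simp [Pi.star_apply, RCLike.star_def, Complex.conj_ofReal]
  rw [this, Matrix.mul_assoc]

lemma Hd_psd (hσ : σ.IsHermitian) {d : Fin n → ℝ} (hd : ∀ i, 0 ≤ d i) :
    (Hd hσ d).PosSemidef := by
  have h : (diagonal (fun i => ((d i : ℝ) : ℂ))).PosSemidef := by
    rw [posSemidef_diagonal_iff]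
    intro i
    rw [Complex.zero_le_real]
    exact hd i
  have := h.mul_mul_conjTranspose_same (hσ.eigenvectorUnitary : Matrix (Fin n) (Fin n) ℂ)
  rwa [← star_eq_conjTranspose] at this

lemma Hd_one (hσ : σ.IsHermitian) : Hd hσ (fun _ => 1) = 1 := by
  unfold Hd
  have : diagonal (fun i : Fin n => ((1 : ℝ) : ℂ)) = 1 := by simp [diagonal_one]
  rw [this, Matrix.mul_one, mul_self_starU hσ]

lemma Hd_sub (hσ : σ.IsHermitian) (a b : Fin n → ℝ) :
    Hd hσ a - Hd hσ b = Hd hσ (fun i => a i - b i) := by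
  unfold Hd
  rw [← Matrix.sub_mul, ← Matrix.mul_sub, diagonal_sub]
  congr 2
  ext i; push_cast; ring

lemma Hd_smul (hσ : σ.IsHermitian) (l : ℝ) (a : Fin n → ℝ) :
    l • Hd hσ a = Hd hσ (fun i => l * a i) := by
  unfold Hd
  rw [← smul_mul_assoc, ← mul_smul_comm, ← diagonal_smul]
  congr 2
  ext i j
  by_cases h : i = j <;> simp [Matrix.diagonal_apply, h]

lemma Hd_quadform (hσ : σ.IsHermitian) (d : Fin n → ℝ) (v : Fin n → ℂ) :
    (dotProduct (star v) ((Hd hσ d) *ᵥ v)).re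
      = ∑ i, d i * Complex.normSq ((star (hσ.eigenvectorUnitary : Matrix (Fin n) (Fin n) ℂ) *ᵥ v) i) := by
  unfold Hd
  rw [quadform_diag]
  rw [Complex.re_sum]
  refine Finset.sum_congr rfl fun i _ => ?_
  rw [← Complex.ofReal_mul, Complex.ofReal_re]

lemma rpowH_eq (hσ : σ.IsHermitian) (t : ℝ) :
    σ.rpowH t = Hd hσ (fun i => hσ.eigenvalues i ^ t) := by
  unfold Matrix.rpowH Hd
  rw [dif_pos hσ]

lemma sigma_eq_Hd (hσ : σ.IsHermitian) : σ = Hd hσ (hσ.eigenvalues) :=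
  hσ.spectral_theorem

end SRhelp

namespace SRhelp
variable {n : ℕ}

lemma trace_rpowH_re (M : Matrix (Fin n) (Fin n) ℂ) (hM : M.IsHermitian) (t : ℝ) :
    (Matrix.trace (M.rpowH t)).re = ∑ i, hM.eigenvalues i ^ t := by
  rw [Matrix.rpowH, dif_pos hM, Matrix.trace_mul_cycle, star_mul_selfU hM, Matrix.one_mul,
    Matrix.trace_diagonal, Complex.re_sum]
  exact Finset.sum_congr rfl fun i _ => Complex.ofReal_re _

lemma dot_conj (C A : Matrix (Fin n) (Fin n) ℂ) (v : Fin n → ℂ) :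
    dotProduct (star (C *ᵥ v)) (A *ᵥ (C *ᵥ v))
      = dotProduct (star v) ((Cᴴ * A * C) *ᵥ v) := by
  rw [star_mulVec, ← Matrix.mulVec_mulVec, Matrix.dotProduct_mulVec, Matrix.vecMul_vecMul,
    ← Matrix.dotProduct_mulVec, Matrix.mulVec_mulVec, Matrix.mul_assoc]

lemma im_quadform_eq_zero {M : Matrix (Fin n) (Fin n) ℂ} (hM : M.IsHermitian) (v : Fin n → ℂ) :
    (dotProduct (star v) (M *ᵥ v)).im = 0 := by
  have h : star (dotProduct (star v) (M *ᵥ v)) = dotProduct (star v) (M *ᵥ v) := by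
    conv_lhs => rw [star_dotProduct]
    rw [star_star, star_mulVec, hM.eq, ← Matrix.dotProduct_mulVec]
  have := congrArg Complex.im h
  simp only [Complex.star_def, Complex.conj_im] at this
  linarith

lemma eig_le_of_le_smul_one {A : Matrix (Fin n) (Fin n) ℂ} (hA : A.IsHermitian) {l : ℝ}
    (h : ((l : ℂ) • (1 : Matrix (Fin n) (Fin n) ℂ) - A).PosSemidef) (i : Fin n) :
    hA.eigenvalues i ≤ l := by
  set V := (hA.eigenvectorUnitary : Matrix (Fin n) (Fin n) ℂ)
  have hpsd := h.conjTranspose_mul_mul_same V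
  have hkey : Vᴴ * ((l : ℂ) • (1 : Matrix (Fin n) (Fin n) ℂ) - A) * V
      = Matrix.diagonal (fun i => (l : ℂ) - (hA.eigenvalues i : ℂ)) := by
    have hA' : Vᴴ * A * V = Matrix.diagonal (fun i => (hA.eigenvalues i : ℂ)) := by
      conv_lhs => rw [hA.spectral_theorem]
      rw [← Matrix.star_eq_conjTranspose]
      calc star V * (V * Matrix.diagonal (RCLike.ofReal ∘ hA.eigenvalues) * star V) * V
          = (star V * V) * Matrix.diagonal (RCLike.ofReal ∘ hA.eigenvalues) * (star V * V) := by
            noncomm_ring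
        _ = _ := by rw [star_mul_selfU hA, Matrix.one_mul, Matrix.mul_one]; rfl
    have h1 : Vᴴ * ((l : ℂ) • (1 : Matrix (Fin n) (Fin n) ℂ)) * V
        = Matrix.diagonal (fun _ => (l : ℂ)) := by
      rw [Matrix.mul_smul, Matrix.mul_one, Matrix.smul_mul, ← Matrix.star_eq_conjTranspose,
        star_mul_selfU hA]
      ext i j
      by_cases hij : i = j <;> simp [Matrix.diagonal_apply, hij, Matrix.one_apply]
    rw [Matrix.mul_sub, Matrix.sub_mul, h1, hA', Matrix.diagonal_sub]
  rw [hkey] at hpsd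
  have := Matrix.posSemidef_diagonal_iff.mp hpsd i
  rw [Complex.le_def] at this
  simpa using this.1

lemma eq_zero_of_forall_mulVec {M : Matrix (Fin n) (Fin n) ℂ}
    (h : ∀ w, M *ᵥ w = 0) : M = 0 := by
  ext i j
  have := congrFun (h (Pi.single j 1)) i
  simpa using this

end SRhelp

namespace SRhelp
variable {n : ℕ}

lemma realSmul_eq (l : ℝ) (M : Matrix (Fin n) (Fin n) ℂ) :
    l • M = (l : ℂ) • M := by
  ext i j; simp [Matrix.smul_apply, Complex.real_smul]

lemma psd_smul {M : Matrix (Fin n) (Fin n) ℂ} (hM : M.PosSemidef) {l : ℝ} (hl : 0 ≤ l) :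
    ((l : ℂ) • M).PosSemidef := by
  refine PosSemidef.of_dotProduct_mulVec_nonneg ?_ ?_
  · rw [Matrix.IsHermitian, Matrix.conjTranspose_smul, hM.1.eq]
    congr 1
    simp [Complex.conj_ofReal]
  · intro x
    rw [Matrix.smul_mulVec, dotProduct_smul]
    exact smul_nonneg (by rw [Complex.zero_le_real]; exact hl) (hM.dotProduct_mulVec_nonneg x)

lemma trace_re_nonneg {M : Matrix (Fin n) (Fin n) ℂ} (hM : M.PosSemidef) :
    0 ≤ (Matrix.trace M).re := by
  rw [Matrix.trace]
  rw [Complex.re_sum]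
  simp only [Matrix.diag]
  refine Finset.sum_nonneg fun i _ => ?_
  have h := hM.dotProduct_mulVec_nonneg (Pi.single i 1)
  have hd : dotProduct (star (Pi.single i 1)) (M *ᵥ (Pi.single i (1:ℂ))) = M i i := by
    simp [Matrix.mulVec_single, dotProduct, Pi.single_apply, apply_ite (star : ℂ → ℂ),
      Finset.sum_ite_eq]
  rw [hd, Complex.le_def] at h
  simpa using h.1

lemma trace_Hd {σ : Matrix (Fin n) (Fin n) ℂ} (hσ : σ.IsHermitian) (d : Fin n → ℝ) :
    Matrix.trace (Hd hσ d) = ((∑ i, d i : ℝ) : ℂ) := by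
  unfold Hd
  rw [Matrix.trace_mul_cycle, star_mul_selfU hσ, Matrix.one_mul, Matrix.trace_diagonal]
  push_cast
  rfl

end SRhelp

namespace SRhelp
variable {n : ℕ} {ρ σ : Matrix (Fin n) (Fin n) ℂ}

lemma Hd_zero (hσ : σ.IsHermitian) : Hd hσ (fun _ => 0) = 0 := by
  unfold Hd
  have : Matrix.diagonal (fun _ : Fin n => ((0:ℝ):ℂ)) = 0 := by simp
  rw [this, Matrix.mul_zero, Matrix.zero_mul]

lemma supp_proj (hσ : σ.IsHermitian)
    (hsupp : ∀ v : Fin n → ℂ, σ.mulVec v = 0 → ρ.mulVec v = 0)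
    (hρH : ρ.IsHermitian) :
    ρ * Hd hσ (fun i => if hσ.eigenvalues i = 0 then 0 else 1) = ρ ∧
    Hd hσ (fun i => if hσ.eigenvalues i = 0 then 0 else 1) * ρ = ρ := by
  set Pc := Hd hσ (fun i => 1 - if hσ.eigenvalues i = 0 then 0 else 1) with hPc
  have hσPc : σ * Pc = 0 := by
    conv_lhs => rw [sigma_eq_Hd hσ, hPc, Hd_mul]
    have : (fun i => hσ.eigenvalues i * (1 - if hσ.eigenvalues i = 0 then 0 else 1))
        = fun _ => (0:ℝ) := by
      ext i; by_cases h : hσ.eigenvalues i = 0 <;> simp [h]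
    rw [this, Hd_zero]
  have hρPc : ρ * Pc = 0 := by
    apply eq_zero_of_forall_mulVec
    intro w
    have h1 : σ *ᵥ (Pc *ᵥ w) = 0 := by
      rw [Matrix.mulVec_mulVec, hσPc, Matrix.zero_mulVec]
    have h2 := hsupp _ h1
    rwa [Matrix.mulVec_mulVec] at h2
  have hP : Hd hσ (fun i => if hσ.eigenvalues i = 0 then 0 else 1) = 1 - Pc := by
    rw [hPc, ← Hd_one hσ (n := n), Hd_sub]
    congr 1; ext i; ring
  constructor
  · rw [hP, Matrix.mul_sub, Matrix.mul_one, hρPc, sub_zero]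
  · rw [hP, Matrix.sub_mul, Matrix.one_mul]
    have : Pc * ρ = 0 := by
      have := congrArg Matrix.conjTranspose hρPc
      rwa [Matrix.conjTranspose_mul, Matrix.conjTranspose_zero, hρH.eq,
        (Hd_herm hσ _).eq] at this
    rw [this, sub_zero]

end SRhelp

namespace SRhelp
variable {n : ℕ} {ρ σ : Matrix (Fin n) (Fin n) ℂ}

lemma rpowH_eq_Hd (hσ : σ.PosSemidef) (t : ℝ) :
    σ.rpowH t = Hd hσ.1 (fun i => hσ.1.eigenvalues i ^ t) := rpowH_eq hσ.1 t

lemma rpow_cancel (hσ : σ.PosSemidef) {α : ℝ} (hα : 1 < α) :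
    σ.rpowH ((α-1)/(2*α)) * σ.rpowH ((1-α)/(2*α))
      = Hd hσ.1 (fun i => if hσ.1.eigenvalues i = 0 then 0 else 1) ∧
    σ.rpowH ((1-α)/(2*α)) * σ.rpowH ((α-1)/(2*α))
      = Hd hσ.1 (fun i => if hσ.1.eigenvalues i = 0 then 0 else 1) := by
  have hα0 : (0:ℝ) < α := by linarith
  have hc : (0:ℝ) < (α-1)/(2*α) := div_pos (by linarith) (by linarith)
  have he : (1-α)/(2*α) ≠ 0 := div_ne_zero (by linarith) (by linarith)
  have key : (fun i => hσ.1.eigenvalues i ^ ((α-1)/(2*α)) * hσ.1.eigenvalues i ^ ((1-α)/(2*α)))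
      = fun i => if hσ.1.eigenvalues i = 0 then (0:ℝ) else 1 := by
    funext i
    by_cases h : hσ.1.eigenvalues i = 0
    · simp [h, Real.zero_rpow (ne_of_gt hc), Real.zero_rpow he]
    · have hpos : 0 < hσ.1.eigenvalues i := lt_of_le_of_ne (hσ.eigenvalues_nonneg i) (Ne.symm h)
      rw [← Real.rpow_add hpos]
      have h0 : (α-1)/(2*α) + (1-α)/(2*α) = 0 := by field_simp; ring
      simp [h0, h]
  have key' : (fun i => hσ.1.eigenvalues i ^ ((1-α)/(2*α)) * hσ.1.eigenvalues i ^ ((α-1)/(2*α)))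
      = fun i => if hσ.1.eigenvalues i = 0 then (0:ℝ) else 1 := by
    funext i; rw [mul_comm]; exact congrFun key i
  constructor
  · rw [rpowH_eq_Hd hσ, rpowH_eq_Hd hσ, Hd_mul, key]
  · rw [rpowH_eq_Hd hσ, rpowH_eq_Hd hσ, Hd_mul, key']

lemma rpow_sq (hσ : σ.PosSemidef) {α : ℝ} (hα : 1 < α) :
    σ.rpowH ((α-1)/(2*α)) * σ.rpowH ((α-1)/(2*α))
      = Hd hσ.1 (fun i => hσ.1.eigenvalues i ^ ((α-1)/α)) := by
  have hα0 : (0:ℝ) < α := by linarith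
  have hc : (0:ℝ) < (α-1)/(2*α) := div_pos (by linarith) (by linarith)
  have hβ : (0:ℝ) < (α-1)/α := div_pos (by linarith) (by linarith)
  rw [rpowH_eq_Hd hσ, Hd_mul]
  have key : (fun i => hσ.1.eigenvalues i ^ ((α-1)/(2*α)) * hσ.1.eigenvalues i ^ ((α-1)/(2*α)))
      = fun i => hσ.1.eigenvalues i ^ ((α-1)/α) := by
    funext i
    by_cases h : hσ.1.eigenvalues i = 0
    · simp [h, Real.zero_rpow (ne_of_gt hc), Real.zero_rpow (ne_of_gt hβ)]
    · have hpos : 0 < hσ.1.eigenvalues i := lt_of_le_of_ne (hσ.eigenvalues_nonneg i) (Ne.symm h)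
      rw [← Real.rpow_add hpos]
      congr 1; field_simp; ring
  rw [key]

lemma rpow_sandwich_sigma (hσ : σ.PosSemidef) {α : ℝ} (hα : 1 < α) :
    σ.rpowH ((1-α)/(2*α)) * σ * σ.rpowH ((1-α)/(2*α))
      = Hd hσ.1 (fun i => hσ.1.eigenvalues i ^ (α⁻¹)) := by
  have hα0 : (0:ℝ) < α := by linarith
  have he : (1-α)/(2*α) ≠ 0 := div_ne_zero (by linarith) (by linarith)
  rw [rpowH_eq_Hd hσ]
  have hmid : Hd hσ.1 (fun i => hσ.1.eigenvalues i ^ ((1-α)/(2*α))) * σ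
        * Hd hσ.1 (fun i => hσ.1.eigenvalues i ^ ((1-α)/(2*α)))
      = Hd hσ.1 (fun i => hσ.1.eigenvalues i ^ ((1-α)/(2*α))) * Hd hσ.1 hσ.1.eigenvalues
        * Hd hσ.1 (fun i => hσ.1.eigenvalues i ^ ((1-α)/(2*α))) := by
    rw [← sigma_eq_Hd hσ.1]
  rw [hmid, Hd_mul, Hd_mul]
  have key : (fun i => (fun j => hσ.1.eigenvalues j ^ ((1-α)/(2*α)) * hσ.1.eigenvalues j) i
        * hσ.1.eigenvalues i ^ ((1-α)/(2*α)))
      = fun i => hσ.1.eigenvalues i ^ (α⁻¹) := by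
    funext i
    by_cases h : hσ.1.eigenvalues i = 0
    · simp [h, Real.zero_rpow he, Real.zero_rpow (inv_ne_zero (ne_of_gt hα0))]
    · have hpos : 0 < hσ.1.eigenvalues i := lt_of_le_of_ne (hσ.eigenvalues_nonneg i) (Ne.symm h)
      simp only []
      conv_lhs => rw [show hσ.1.eigenvalues i ^ ((1-α)/(2*α)) * hσ.1.eigenvalues i
          = hσ.1.eigenvalues i ^ ((1-α)/(2*α)) * hσ.1.eigenvalues i ^ (1:ℝ) by
        rw [Real.rpow_one]]
      rw [← Real.rpow_add hpos, ← Real.rpow_add hpos]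
      congr 1
      have hne : α ≠ 0 := by linarith
      field_simp
      try ring
      try exact Or.inl trivial
  rw [key]

end SRhelp

namespace SRhelp
variable {n : ℕ} {ρ σ : Matrix (Fin n) (Fin n) ℂ}

lemma jensen_bound {A : Matrix (Fin n) (Fin n) ℂ} (hA : A.PosSemidef) (u : Fin n → ℂ)
    {α : ℝ} (hα : 1 ≤ α) (hS : 0 < (dotProduct (star u) u).re) :
    ((dotProduct (star u) (A *ᵥ u)).re / (dotProduct (star u) u).re) ^ α
      ≤ ∑ i, hA.1.eigenvalues i ^ α := by
  classical
  set p : Fin n → ℝ := fun i =>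
    Complex.normSq ((star (hA.1.eigenvectorUnitary : Matrix (Fin n) (Fin n) ℂ) *ᵥ u) i) with hp
  have hQ : (dotProduct (star u) (A *ᵥ u)).re = ∑ i, hA.1.eigenvalues i * p i := by
    conv_lhs => rw [show A *ᵥ u = Hd hA.1 hA.1.eigenvalues *ᵥ u by rw [← sigma_eq_Hd hA.1]]
    exact Hd_quadform hA.1 _ u
  have hS' : (dotProduct (star u) u).re = ∑ i, p i := by
    have h2 := Hd_quadform hA.1 (fun _ => 1) u
    rw [Hd_one hA.1, Matrix.one_mulVec] at h2
    rw [h2]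
    simp [hp]
  set S := (dotProduct (star u) u).re with hSdef
  have hpnn : ∀ i, 0 ≤ p i := fun i => Complex.normSq_nonneg _
  have hpleS : ∀ i, p i ≤ S := by
    intro i
    rw [hS']
    exact Finset.single_le_sum (fun j _ => hpnn j) (Finset.mem_univ i)
  have hsum1 : ∑ i, p i / S = 1 := by
    rw [← Finset.sum_div, ← hS', div_self (ne_of_gt hS)]
  have main := Real.rpow_arith_mean_le_arith_mean_rpow Finset.univ (fun i => p i / S)
    hA.1.eigenvalues (fun i _ => div_nonneg (hpnn i) (le_of_lt hS))
    hsum1 (fun i _ => hA.eigenvalues_nonneg i) hα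
  have hQS : ∑ i, p i / S * hA.1.eigenvalues i
      = (dotProduct (star u) (A *ᵥ u)).re / S := by
    rw [hQ, Finset.sum_div]
    exact Finset.sum_congr rfl fun i _ => by ring
  rw [hQS] at main
  refine le_trans main (Finset.sum_le_sum fun i _ => ?_)
  have : p i / S ≤ 1 := div_le_one_of_le₀ (hpleS i) (le_of_lt hS)
  calc p i / S * hA.1.eigenvalues i ^ α
      ≤ 1 * hA.1.eigenvalues i ^ α := by
        apply mul_le_mul_of_nonneg_right this
        exact Real.rpow_nonneg (hA.eigenvalues_nonneg i) α
    _ = _ := one_mul _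

lemma sandwich_psd (hρ : ρ.PosSemidef) (hσ : σ.PosSemidef) (t : ℝ) :
    (σ.rpowH t * ρ * σ.rpowH t).PosSemidef := by
  have hC : (σ.rpowH t).IsHermitian := by
    rw [rpowH_eq_Hd hσ]; exact Hd_herm hσ.1 _
  have := hρ.mul_mul_conjTranspose_same (σ.rpowH t)
  rwa [hC.eq] at this

lemma eig_le_real {A : Matrix (Fin n) (Fin n) ℂ} (hA : A.IsHermitian) {l : ℝ}
    (h : (l • (1 : Matrix (Fin n) (Fin n) ℂ) - A).PosSemidef) (i : Fin n) :
    hA.eigenvalues i ≤ l := by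
  apply eig_le_of_le_smul_one hA
  rwa [realSmul_eq] at h

lemma key_upper (hρ : ρ.PosSemidef) (hσ : σ.PosSemidef) (hσ1 : σ.trace = 1)
    {l : ℝ} (hl0 : 0 ≤ l) (hl : (l • σ - ρ).PosSemidef) {α : ℝ} (hα : 1 < α) :
    (l • (1 : Matrix (Fin n) (Fin n) ℂ)
      - σ.rpowH ((1-α)/(2*α)) * ρ * σ.rpowH ((1-α)/(2*α))).PosSemidef := by
  have hα0 : (0:ℝ) < α := by linarith
  set C := σ.rpowH ((1-α)/(2*α)) with hC
  have hCH : C.IsHermitian := by rw [hC, rpowH_eq_Hd hσ]; exact Hd_herm hσ.1 _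
  -- sum of eigenvalues of σ is 1
  have hsum : ∑ i, hσ.1.eigenvalues i = 1 := by
    have := trace_Hd hσ.1 hσ.1.eigenvalues
    rw [← sigma_eq_Hd hσ.1, hσ1] at this
    exact_mod_cast this.symm
  have hle1 : ∀ i, hσ.1.eigenvalues i ≤ 1 := by
    intro i
    rw [← hsum]
    exact Finset.single_le_sum (fun j _ => hσ.eigenvalues_nonneg j) (Finset.mem_univ i)
  -- 1 - C σ C is PSD
  have hmid : (1 : Matrix (Fin n) (Fin n) ℂ) - C * σ * C
      = Hd hσ.1 (fun i => 1 - hσ.1.eigenvalues i ^ (α⁻¹)) := by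
    rw [hC, rpow_sandwich_sigma hσ hα, ← Hd_sub hσ.1, Hd_one hσ.1]
  have hmidpsd : ((1 : Matrix (Fin n) (Fin n) ℂ) - C * σ * C).PosSemidef := by
    rw [hmid]
    apply Hd_psd hσ.1
    intro i
    have : hσ.1.eigenvalues i ^ (α⁻¹) ≤ 1 :=
      Real.rpow_le_one (hσ.eigenvalues_nonneg i) (hle1 i) (by positivity)
    linarith
  -- conjugated PSD
  have hconj : (C * (l • σ - ρ) * C).PosSemidef := by
    have := hl.mul_mul_conjTranspose_same C
    rwa [hCH.eq] at this
  -- algebraic identity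
  have hiden : l • (1 : Matrix (Fin n) (Fin n) ℂ) - C * ρ * C
      = C * (l • σ - ρ) * C + l • ((1 : Matrix (Fin n) (Fin n) ℂ) - C * σ * C) := by
    rw [Matrix.mul_sub, Matrix.sub_mul, smul_sub]
    rw [Matrix.mul_smul, Matrix.smul_mul]
    abel
  rw [hiden]
  have hsmul : (l • ((1 : Matrix (Fin n) (Fin n) ℂ) - C * σ * C)).PosSemidef := by
    rw [realSmul_eq]
    exact psd_smul hmidpsd hl0
  exact hconj.add hsmul

lemma key_Q (hρH : ρ.IsHermitian) (hσ : σ.PosSemidef)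
    (hsupp : ∀ v : Fin n → ℂ, σ.mulVec v = 0 → ρ.mulVec v = 0) {α : ℝ} (hα : 1 < α) :
    σ.rpowH ((α-1)/(2*α)) * (σ.rpowH ((1-α)/(2*α)) * ρ * σ.rpowH ((1-α)/(2*α)))
      * σ.rpowH ((α-1)/(2*α)) = ρ := by
  have h1 := (rpow_cancel hσ hα).1
  have h2 := (rpow_cancel hσ hα).2
  have h3 := supp_proj hσ.1 hsupp hρH
  calc σ.rpowH ((α-1)/(2*α)) * (σ.rpowH ((1-α)/(2*α)) * ρ * σ.rpowH ((1-α)/(2*α)))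
      * σ.rpowH ((α-1)/(2*α))
      = (σ.rpowH ((α-1)/(2*α)) * σ.rpowH ((1-α)/(2*α))) * ρ
        * (σ.rpowH ((1-α)/(2*α)) * σ.rpowH ((α-1)/(2*α))) := by noncomm_ring
    _ = Hd hσ.1 (fun i => if hσ.1.eigenvalues i = 0 then 0 else 1) * ρ
        * Hd hσ.1 (fun i => if hσ.1.eigenvalues i = 0 then 0 else 1) := by rw [h1, h2]
    _ = ρ := by rw [h3.2, h3.1]

end SRhelp

namespace SRhelp
open Filter
variable {n : ℕ} {ρ σ : Matrix (Fin n) (Fin n) ℂ}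

lemma tendsto_inv_sub_one : Tendsto (fun α : ℝ => (α-1)⁻¹) atTop (nhds 0) := by
  apply Filter.Tendsto.inv_tendsto_atTop
  exact tendsto_atTop_add_const_right atTop (-1) tendsto_id

lemma tendsto_ratio : Tendsto (fun α : ℝ => α/(α-1)) atTop (nhds 1) := by
  have h1 : Tendsto (fun α : ℝ => 1 + (α-1)⁻¹) atTop (nhds 1) := by
    have := tendsto_const_nhds (x := (1:ℝ)) (f := atTop).add tendsto_inv_sub_one
    simpa using this
  apply h1.congr'
  filter_upwards [Filter.eventually_gt_atTop (1:ℝ)] with α hα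
  have : α - 1 ≠ 0 := by linarith
  field_simp
  ring

lemma tendsto_beta : Tendsto (fun α : ℝ => (α-1)/α) atTop (nhds 1) := by
  have h1 : Tendsto (fun α : ℝ => 1 - α⁻¹) atTop (nhds 1) := by
    have := (tendsto_const_nhds (x := (1:ℝ)) (f := atTop)).sub tendsto_inv_atTop_zero
    simpa using this
  apply h1.congr'
  filter_upwards [Filter.eventually_gt_atTop (0:ℝ)] with α hα
  have : α ≠ 0 := by linarith
  field_simp

lemma tendsto_rpow_beta {s : ℝ} (hs : 0 ≤ s) (q : ℝ) :
    Tendsto (fun α : ℝ => s ^ ((α-1)/α) * q) atTop (nhds (s * q)) := by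
  rcases eq_or_lt_of_le hs with h | h
  · have hz : (fun α : ℝ => s ^ ((α-1)/α) * q) =ᶠ[atTop] fun _ => 0 := by
      filter_upwards [Filter.eventually_gt_atTop (1:ℝ)] with α hα
      have hne : (α-1)/α ≠ 0 := ne_of_gt (div_pos (by linarith) (by linarith))
      rw [← h, Real.zero_rpow hne, zero_mul]
    rw [show s * q = 0 by rw [← h, zero_mul]]
    exact Tendsto.congr' hz.symm tendsto_const_nhds
  · have hc : ContinuousAt (fun y : ℝ => s ^ y) 1 := by
      have : (fun y : ℝ => s ^ y) = fun y => Real.exp (Real.log s * y) := by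
        funext y; rw [Real.rpow_def_of_pos h]
      rw [this]
      exact (Real.continuous_exp.comp (continuous_const.mul continuous_id)).continuousAt
    have h2 : Tendsto (fun α : ℝ => s ^ ((α-1)/α)) atTop (nhds (s ^ (1:ℝ))) :=
      hc.tendsto.comp tendsto_beta
    rw [Real.rpow_one] at h2
    exact h2.mul_const q

lemma sum_eig_sigma (hσ : σ.PosSemidef) (hσ1 : σ.trace = 1) :
    ∑ i, hσ.1.eigenvalues i = 1 := by
  have := trace_Hd hσ.1 hσ.1.eigenvalues
  rw [← sigma_eq_Hd hσ.1, hσ1] at this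
  exact_mod_cast this.symm

lemma mulVec_zero_of_sum_zero (hσ : σ.PosSemidef) {v : Fin n → ℂ}
    (h : ∑ i, hσ.1.eigenvalues i
        * Complex.normSq ((star (hσ.1.eigenvectorUnitary : Matrix (Fin n) (Fin n) ℂ) *ᵥ v) i)
      = 0) :
    σ *ᵥ v = 0 := by
  set U := (hσ.1.eigenvectorUnitary : Matrix (Fin n) (Fin n) ℂ)
  set w := star U *ᵥ v with hw
  have hterm : ∀ i ∈ Finset.univ, hσ.1.eigenvalues i * Complex.normSq (w i) = 0 := by
    rw [← Finset.sum_eq_zero_iff_of_nonneg]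
    · exact h
    · intro i _
      exact mul_nonneg (hσ.eigenvalues_nonneg i) (Complex.normSq_nonneg _)
  have hdw : Matrix.diagonal (fun i => ((hσ.1.eigenvalues i : ℝ) : ℂ)) *ᵥ w = 0 := by
    funext i
    rw [Matrix.mulVec_diagonal]
    have := hterm i (Finset.mem_univ i)
    rcases mul_eq_zero.mp this with h0 | h0
    · simp [h0]
    · rw [Complex.normSq_eq_zero] at h0
      simp [h0]
  have hσv : σ *ᵥ v = U *ᵥ (Matrix.diagonal (fun i => ((hσ.1.eigenvalues i : ℝ) : ℂ)) *ᵥ w) := by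
    conv_lhs => rw [sigma_eq_Hd hσ.1]
    unfold Hd
    rw [← Matrix.mulVec_mulVec, ← Matrix.mulVec_mulVec]
  rw [hσv, hdw, Matrix.mulVec_zero]

end SRhelp

namespace SRhelp
open Filter
variable {n : ℕ} {ρ σ : Matrix (Fin n) (Fin n) ℂ}

lemma one_sub_psd (hρ : ρ.PosSemidef) (hρ1 : ρ.trace = 1) :
    ((1 : Matrix (Fin n) (Fin n) ℂ) - ρ).PosSemidef := by
  have h1 : (1 : Matrix (Fin n) (Fin n) ℂ) - ρ
      = Hd hρ.1 (fun i => 1 - hρ.1.eigenvalues i) := by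
    conv_lhs => rw [show ρ = Hd hρ.1 hρ.1.eigenvalues from sigma_eq_Hd hρ.1,
      ← Hd_one hρ.1, Hd_sub hρ.1]
  rw [h1]
  apply Hd_psd hρ.1
  intro i
  have hsum := sum_eig_sigma hρ hρ1
  have : hρ.1.eigenvalues i ≤ 1 := by
    rw [← hsum]
    exact Finset.single_le_sum (fun j _ => hρ.eigenvalues_nonneg j) (Finset.mem_univ i)
  linarith

lemma re_smul_dot (l : ℝ) (M : Matrix (Fin n) (Fin n) ℂ) (x : Fin n → ℂ) :
    (dotProduct (star x) ((l • M) *ᵥ x)).re = l * (dotProduct (star x) (M *ᵥ x)).re := by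
  rw [Matrix.smul_mulVec, dotProduct_smul]
  rw [Complex.real_smul, Complex.re_ofReal_mul]

lemma exists_scale (hρ : ρ.PosSemidef) (hσ : σ.PosSemidef)
    (hρ1 : ρ.trace = 1) (hσ1 : σ.trace = 1)
    (hsupp : ∀ v : Fin n → ℂ, σ.mulVec v = 0 → ρ.mulVec v = 0) :
    ∃ l : ℝ, 0 < l ∧ (l • σ - ρ).PosSemidef := by
  classical
  have hsum := sum_eig_sigma hσ hσ1
  have hpos_ne : (Finset.univ.filter (fun i => 0 < hσ.1.eigenvalues i)).Nonempty := by
    by_contra h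
    rw [Finset.not_nonempty_iff_eq_empty, Finset.filter_eq_empty_iff] at h
    have : ∀ i, hσ.1.eigenvalues i = 0 := fun i =>
      le_antisymm (not_lt.mp (h (Finset.mem_univ i))) (hσ.eigenvalues_nonneg i)
    rw [Finset.sum_congr rfl (fun i _ => this i)] at hsum
    simp at hsum
  set smin := (Finset.univ.filter (fun i => 0 < hσ.1.eigenvalues i)).inf' hpos_ne hσ.1.eigenvalues
    with hsmin
  have hsmin_pos : 0 < smin := by
    rw [hsmin, Finset.lt_inf'_iff]
    intro i hi
    exact (Finset.mem_filter.mp hi).2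
  refine ⟨smin⁻¹, inv_pos.mpr hsmin_pos, ?_⟩
  have hherm : (smin⁻¹ • σ - ρ).IsHermitian := by
    rw [Matrix.IsHermitian, Matrix.conjTranspose_sub, Matrix.conjTranspose_smul,
      hσ.1.eq, hρ.1.eq]
    simp
  refine PosSemidef.of_dotProduct_mulVec_nonneg hherm fun x => ?_
  set z := dotProduct (star x) ((smin⁻¹ • σ - ρ) *ᵥ x) with hz
  have him : z.im = 0 := im_quadform_eq_zero hherm x
  have hre : 0 ≤ z.re := by
    have hexp : z = dotProduct (star x) ((smin⁻¹ • σ) *ᵥ x)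
        - dotProduct (star x) (ρ *ᵥ x) := by
      rw [hz, Matrix.sub_mulVec, dotProduct_sub]
    set q : Fin n → ℝ := fun i =>
      Complex.normSq ((star (hσ.1.eigenvectorUnitary : Matrix (Fin n) (Fin n) ℂ) *ᵥ x) i)
      with hq
    have hRx : (dotProduct (star x) (σ *ᵥ x)).re = ∑ i, hσ.1.eigenvalues i * q i := by
      conv_lhs => rw [show σ *ᵥ x = Hd hσ.1 hσ.1.eigenvalues *ᵥ x by rw [← sigma_eq_Hd hσ.1]]
      exact Hd_quadform hσ.1 _ x
    -- bound Qx
    set ind : Fin n → ℝ := fun i => if hσ.1.eigenvalues i = 0 then 0 else 1 with hind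
    set y := Hd hσ.1 ind *ᵥ x with hy
    have hPH : (Hd hσ.1 ind).IsHermitian := Hd_herm hσ.1 ind
    have hsp := supp_proj hσ.1 hsupp hρ.1
    have hyρ : dotProduct (star y) (ρ *ᵥ y) = dotProduct (star x) (ρ *ᵥ x) := by
      rw [hy, dot_conj, hPH.eq]
      have hmid : Hd hσ.1 ind * ρ * Hd hσ.1 ind = ρ := by rw [hsp.2, hsp.1]
      rw [hmid]
    have hyy : (dotProduct (star y) y).re = ∑ i, ind i * q i := by
      have h1 : dotProduct (star y) y = dotProduct (star y) ((1 : Matrix (Fin n) (Fin n) ℂ) *ᵥ y) := by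
        rw [Matrix.one_mulVec]
      rw [h1, hy, dot_conj, hPH.eq]
      have h2 : Hd hσ.1 ind * 1 * Hd hσ.1 ind = Hd hσ.1 (fun i => ind i * ind i) := by
        rw [Matrix.mul_one, Hd_mul]
      rw [h2]
      have h3 : (fun i => ind i * ind i) = ind := by
        funext i; rw [hind]; by_cases h : hσ.1.eigenvalues i = 0 <;> simp [h]
      rw [h3]
      exact Hd_quadform hσ.1 _ x
    have hQ_le : (dotProduct (star x) (ρ *ᵥ x)).re ≤ ∑ i, ind i * q i := by
      rw [← hyρ, ← hyy]
      have := (one_sub_psd hρ hρ1).dotProduct_mulVec_nonneg y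
      rw [Complex.le_def] at this
      have h4 : (dotProduct (star y) (((1 : Matrix (Fin n) (Fin n) ℂ) - ρ) *ᵥ y)).re
          = (dotProduct (star y) y).re - (dotProduct (star y) (ρ *ᵥ y)).re := by
        rw [Matrix.sub_mulVec, dotProduct_sub, Complex.sub_re, Matrix.one_mulVec]
      have h5 := this.1
      rw [h4] at h5
      simp only [Complex.zero_re] at h5
      linarith
    have hind_le : ∑ i, ind i * q i ≤ smin⁻¹ * ∑ i, hσ.1.eigenvalues i * q i := by
      rw [Finset.mul_sum]
      apply Finset.sum_le_sum
      intro i _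
      by_cases h : hσ.1.eigenvalues i = 0
      · simp [hind, h]
      · have hpos : 0 < hσ.1.eigenvalues i :=
          lt_of_le_of_ne (hσ.eigenvalues_nonneg i) (Ne.symm h)
        have hmin_le : smin ≤ hσ.1.eigenvalues i := by
          rw [hsmin]
          exact Finset.inf'_le _ (Finset.mem_filter.mpr ⟨Finset.mem_univ i, hpos⟩)
        have h1 : (1:ℝ) ≤ smin⁻¹ * hσ.1.eigenvalues i := by
          have h2 : smin⁻¹ * smin ≤ smin⁻¹ * hσ.1.eigenvalues i :=
            mul_le_mul_of_nonneg_left hmin_le (le_of_lt (inv_pos.mpr hsmin_pos))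
          rwa [inv_mul_cancel₀ (ne_of_gt hsmin_pos)] at h2
        have hqnn : 0 ≤ q i := Complex.normSq_nonneg _
        calc ind i * q i ≤ 1 * q i := by
              apply mul_le_mul_of_nonneg_right _ hqnn
              rw [hind]; by_cases h' : hσ.1.eigenvalues i = 0 <;> simp [h']
          _ ≤ (smin⁻¹ * hσ.1.eigenvalues i) * q i := mul_le_mul_of_nonneg_right h1 hqnn
          _ = smin⁻¹ * (hσ.1.eigenvalues i * q i) := by ring
    rw [hexp, Complex.sub_re, re_smul_dot, hRx]
    linarith
  rw [Complex.le_def]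
  constructor
  · simpa using hre
  · simp [him]

end SRhelp

namespace SRhelp
open Filter
variable {n : ℕ} {ρ σ : Matrix (Fin n) (Fin n) ℂ}

lemma one_le_of_mem (hρ1 : ρ.trace = 1) (hσ1 : σ.trace = 1) {l : ℝ}
    (h : (l • σ - ρ).PosSemidef) : 1 ≤ l := by
  have h1 := trace_re_nonneg h
  rw [Matrix.trace_sub, Matrix.trace_smul, hρ1, hσ1] at h1
  have : (l • (1:ℂ) - 1).re = l - 1 := by
    simp [Complex.real_smul]
  rw [this] at h1
  linarith

end SRhelp

end SRhelpSection

open SRhelp Filter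

/-- The sandwiched Rényi relative entropy converges to the relative max-entropy
`log inf {λ > 0 : ρ ≤ λσ}` as `α → ∞`. -/
theorem sandwichedRenyi_tendsto_maxEntropy {n : ℕ}
    (ρ σ : Matrix (Fin n) (Fin n) ℂ) (hρ : ρ.PosSemidef) (hσ : σ.PosSemidef)
    (hρ1 : ρ.trace = 1) (hσ1 : σ.trace = 1)
    (hsupp : ∀ v : Fin n → ℂ, σ.mulVec v = 0 → ρ.mulVec v = 0) :
    Filter.Tendsto (fun α : ℝ => sandwichedRenyi α ρ σ) Filter.atTop
      (nhds (Real.log (sInf {l : ℝ | 0 < l ∧ (l • σ - ρ).PosSemidef}))) := by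
  classical
  set Sset := {l : ℝ | 0 < l ∧ (l • σ - ρ).PosSemidef} with hSset
  obtain ⟨l₀, hl₀pos, hl₀psd⟩ := exists_scale hρ hσ hρ1 hσ1 hsupp
  have hne : Sset.Nonempty := ⟨l₀, hl₀pos, hl₀psd⟩
  have hbdd : BddBelow Sset := ⟨0, fun l hl => le_of_lt hl.1⟩
  have hone : ∀ l ∈ Sset, (1:ℝ) ≤ l := fun l hl => one_le_of_mem hρ1 hσ1 hl.2
  set lam := sInf Sset with hlam
  have hlam1 : 1 ≤ lam := le_csInf hne hone
  have hlam0 : 0 < lam := lt_of_lt_of_le one_pos hlam1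
  have hn : 0 < n := by
    rcases Nat.eq_zero_or_pos n with h | h
    · exfalso
      subst h
      rw [Matrix.trace] at hρ1
      simp at hρ1
    · exact h
  rw [Metric.tendsto_nhds]
  intro ε hε
  -- choose upper witness l
  have hexp_gt : lam < lam * Real.exp (ε/2) := by
    nth_rewrite 1 [← mul_one lam]
    apply mul_lt_mul_of_pos_left _ hlam0
    rw [← Real.exp_zero]
    exact Real.exp_lt_exp.mpr (by linarith)
  obtain ⟨l, hlS, hl_lt⟩ := exists_lt_of_csInf_lt hne hexp_gt
  have hl1 : (1:ℝ) ≤ l := hone l hlS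
  have hl0 : (0:ℝ) < l := lt_of_lt_of_le one_pos hl1
  have hlog_l : Real.log l < Real.log lam + ε/2 := by
    have h := Real.log_lt_log hl0 hl_lt
    rwa [Real.log_mul (ne_of_gt hlam0) (Real.exp_ne_zero _), Real.log_exp] at h
  -- choose lower witness l' and violating vector v
  set l' := lam * Real.exp (-(ε/2)) with hl'def
  have hl'0 : 0 < l' := mul_pos hlam0 (Real.exp_pos _)
  have hl'lt : l' < lam := by
    have h := mul_lt_mul_of_pos_left
      (show Real.exp (-(ε/2)) < 1 by
        rw [← Real.exp_zero]; exact Real.exp_lt_exp.mpr (by linarith)) hlam0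
    rw [mul_one] at h
    rw [hl'def]
    exact h
  have hlog_l' : Real.log l' = Real.log lam - ε/2 := by
    rw [hl'def, Real.log_mul (ne_of_gt hlam0) (Real.exp_ne_zero _), Real.log_exp]
    ring
  have hl'not : ¬ (l' • σ - ρ).PosSemidef := by
    intro h
    exact absurd (csInf_le hbdd (Set.mem_setOf.mpr ⟨hl'0, h⟩)) (not_le.mpr hl'lt)
  have hherm' : (l' • σ - ρ).IsHermitian := by
    rw [Matrix.IsHermitian, Matrix.conjTranspose_sub, Matrix.conjTranspose_smul,
      hσ.1.eq, hρ.1.eq]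
    simp
  obtain ⟨v, hv⟩ : ∃ v, ¬ (0 ≤ dotProduct (star v) ((l' • σ - ρ) *ᵥ v)) := by
    by_contra h
    apply hl'not
    refine PosSemidef.of_dotProduct_mulVec_nonneg hherm' fun x => ?_
    by_contra hx
    exact h ⟨x, hx⟩
  have hvim : (dotProduct (star v) ((l' • σ - ρ) *ᵥ v)).im = 0 := im_quadform_eq_zero hherm' v
  have hvre : (dotProduct (star v) ((l' • σ - ρ) *ᵥ v)).re < 0 := by
    by_contra h
    rw [not_lt] at h
    apply hv
    rw [Complex.le_def]
    exact ⟨by simpa using h, by simp [hvim]⟩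
  clear hv
  set Qv := (dotProduct (star v) (ρ *ᵥ v)).re with hQvdef
  set Rv := (dotProduct (star v) (σ *ᵥ v)).re with hRvdef
  have hQvRv : l' * Rv < Qv := by
    have hsplit : (dotProduct (star v) ((l' • σ - ρ) *ᵥ v)).re = l' * Rv - Qv := by
      rw [Matrix.sub_mulVec, dotProduct_sub, Complex.sub_re, re_smul_dot]
    rw [hsplit] at hvre
    linarith
  have hRv0 : 0 ≤ Rv := by
    have := hσ.re_dotProduct_nonneg v
    simpa using this
  have hQv0 : 0 < Qv := lt_of_le_of_lt (mul_nonneg hl'0.le hRv0) hQvRv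
  set q : Fin n → ℝ := fun i =>
    Complex.normSq ((star (hσ.1.eigenvectorUnitary : Matrix (Fin n) (Fin n) ℂ) *ᵥ v) i) with hqdef
  have hRx_sum : Rv = ∑ i, hσ.1.eigenvalues i * q i := by
    rw [hRvdef]
    conv_lhs => rw [show σ *ᵥ v = Hd hσ.1 hσ.1.eigenvalues *ᵥ v by rw [← sigma_eq_Hd hσ.1]]
    exact Hd_quadform hσ.1 _ v
  have hRvpos : 0 < Rv := by
    rcases eq_or_lt_of_le hRv0 with h | h
    · exfalso
      have hz : σ *ᵥ v = 0 := mulVec_zero_of_sum_zero hσ (by rw [← hRx_sum, ← h])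
      have hz2 := hsupp v hz
      rw [hQvdef, hz2] at hQv0
      simp at hQv0
    · exact h
  have hQR_lt : Real.log lam - ε/2 < Real.log Qv - Real.log Rv := by
    rw [← hlog_l']
    have hlt : l' < Qv / Rv := (lt_div_iff₀ hRvpos).mpr hQvRv
    calc Real.log l' < Real.log (Qv/Rv) := Real.log_lt_log hl'0 hlt
      _ = Real.log Qv - Real.log Rv := Real.log_div (ne_of_gt hQv0) (ne_of_gt hRvpos)
  -- Sfun and its limit
  set Sfun : ℝ → ℝ := fun α => ∑ i, hσ.1.eigenvalues i ^ ((α-1)/α) * q i with hSfundef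
  have hS_tendsto : Tendsto Sfun atTop (nhds Rv) := by
    rw [hRx_sum]
    exact tendsto_finset_sum _ (fun i _ => tendsto_rpow_beta (hσ.eigenvalues_nonneg i) (q i))
  have hSpos_ev : ∀ᶠ α in atTop, 0 < Sfun α := hS_tendsto.eventually_const_lt hRvpos
  -- limit of bound functions
  have hG : Tendsto (fun α : ℝ => (α-1)⁻¹ * Real.log n + (α/(α-1)) * Real.log l)
      atTop (nhds (Real.log l)) := by
    have h := (tendsto_inv_sub_one.mul_const (Real.log n)).add (tendsto_ratio.mul_const (Real.log l))
    simpa using h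
  have hH : Tendsto (fun α : ℝ => (α/(α-1)) * (Real.log Qv - Real.log (Sfun α)))
      atTop (nhds (Real.log Qv - Real.log Rv)) := by
    have hlog : Tendsto (fun α => Real.log (Sfun α)) atTop (nhds (Real.log Rv)) :=
      (Real.continuousAt_log (ne_of_gt hRvpos)).tendsto.comp hS_tendsto
    have h := tendsto_ratio.mul ((tendsto_const_nhds (x := Real.log Qv)).sub hlog)
    simpa using h
  have hG_ev : ∀ᶠ α in atTop,
      (α-1)⁻¹ * Real.log n + (α/(α-1)) * Real.log l < Real.log lam + ε :=
    hG.eventually_lt_const (by linarith)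
  have hH_ev : ∀ᶠ α in atTop,
      Real.log lam - ε < (α/(α-1)) * (Real.log Qv - Real.log (Sfun α)) :=
    hH.eventually_const_lt (by linarith)
  -- main eventual estimate
  filter_upwards [Filter.eventually_gt_atTop (1:ℝ), hSpos_ev, hG_ev, hH_ev]
    with α hα hSα hGα hHα
  have hαpos : (0:ℝ) < α - 1 := by linarith
  set A := σ.rpowH ((1-α)/(2*α)) * ρ * σ.rpowH ((1-α)/(2*α)) with hAdef
  have hApsd : A.PosSemidef := sandwich_psd hρ hσ _
  have hfeq : sandwichedRenyi α ρ σ = (α-1)⁻¹ * Real.log ((Matrix.trace (A.rpowH α)).re) := rfl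
  have hT : (Matrix.trace (A.rpowH α)).re = ∑ i, hApsd.1.eigenvalues i ^ α :=
    trace_rpowH_re A hApsd.1 α
  -- lower bound on the trace
  set C := σ.rpowH ((α-1)/(2*α)) with hCdef
  have hCH : C.IsHermitian := by rw [hCdef, rpowH_eq_Hd hσ]; exact Hd_herm hσ.1 _
  set u := C *ᵥ v with hudef
  have hdot1 : dotProduct (star u) (A *ᵥ u) = dotProduct (star v) (ρ *ᵥ v) := by
    rw [hudef, dot_conj, hCH.eq, hAdef, hCdef, key_Q hρ.1 hσ hsupp hα]
  have hdot2 : (dotProduct (star u) u).re = Sfun α := by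
    have h1 : dotProduct (star u) u = dotProduct (star v) ((C * C) *ᵥ v) := by
      have h2 := dot_conj C (1 : Matrix (Fin n) (Fin n) ℂ) v
      rw [Matrix.one_mulVec, hCH.eq, Matrix.mul_one] at h2
      rw [hudef, h2]
    rw [h1, hCdef, rpow_sq hσ hα]
    exact Hd_quadform hσ.1 _ v
  have hlower : (Qv / Sfun α) ^ α ≤ ∑ i, hApsd.1.eigenvalues i ^ α := by
    have h := jensen_bound hApsd u (le_of_lt hα) (by rw [hdot2]; exact hSα)
    rwa [hdot1, hdot2, ← hQvdef] at h
  -- upper bound on the trace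
  have hupper : ∑ i, hApsd.1.eigenvalues i ^ α ≤ (n:ℝ) * l ^ α := by
    have hkey := key_upper hρ hσ hσ1 (le_of_lt hl0) hlS.2 hα
    rw [← hAdef] at hkey
    have hle : ∀ i, hApsd.1.eigenvalues i ≤ l := fun i => eig_le_real hApsd.1 hkey i
    calc ∑ i, hApsd.1.eigenvalues i ^ α ≤ ∑ _i : Fin n, l ^ α := by
          apply Finset.sum_le_sum
          intro i _
          exact Real.rpow_le_rpow (hApsd.eigenvalues_nonneg i) (hle i) (by linarith)
      _ = (n:ℝ) * l ^ α := by
          rw [Finset.sum_const, Finset.card_univ, Fintype.card_fin, nsmul_eq_mul]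
  have hTpos : 0 < (Matrix.trace (A.rpowH α)).re := by
    rw [hT]
    exact lt_of_lt_of_le (Real.rpow_pos_of_pos (div_pos hQv0 hSα) α) hlower
  -- log bounds
  have hf_le : sandwichedRenyi α ρ σ
      ≤ (α-1)⁻¹ * Real.log n + (α/(α-1)) * Real.log l := by
    rw [hfeq]
    have h1 : Real.log ((Matrix.trace (A.rpowH α)).re) ≤ Real.log ((n:ℝ) * l ^ α) := by
      apply Real.log_le_log hTpos
      rw [hT]
      exact hupper
    have h2 : Real.log ((n:ℝ) * l ^ α) = Real.log n + α * Real.log l := by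
      rw [Real.log_mul (by positivity) (ne_of_gt (Real.rpow_pos_of_pos hl0 α)),
        Real.log_rpow hl0]
    calc (α-1)⁻¹ * Real.log ((Matrix.trace (A.rpowH α)).re)
        ≤ (α-1)⁻¹ * (Real.log n + α * Real.log l) := by
          apply mul_le_mul_of_nonneg_left _ (le_of_lt (inv_pos.mpr hαpos))
          rw [← h2]; exact h1
      _ = (α-1)⁻¹ * Real.log n + (α/(α-1)) * Real.log l := by
          rw [div_eq_mul_inv]
          ring
  have hf_ge : (α/(α-1)) * (Real.log Qv - Real.log (Sfun α)) ≤ sandwichedRenyi α ρ σ := by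
    rw [hfeq]
    have h1 : Real.log ((Qv / Sfun α) ^ α) ≤ Real.log ((Matrix.trace (A.rpowH α)).re) := by
      apply Real.log_le_log (Real.rpow_pos_of_pos (div_pos hQv0 hSα) α)
      rw [hT]
      exact hlower
    rw [Real.log_rpow (div_pos hQv0 hSα), Real.log_div (ne_of_gt hQv0) (ne_of_gt hSα)] at h1
    have h3 := mul_le_mul_of_nonneg_left h1 (le_of_lt (inv_pos.mpr hαpos))
    calc (α/(α-1)) * (Real.log Qv - Real.log (Sfun α))
        = (α-1)⁻¹ * (α * (Real.log Qv - Real.log (Sfun α))) := by ring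
      _ ≤ _ := h3
  rw [Real.dist_eq, abs_lt]
  constructor
  · have := lt_of_lt_of_le hHα hf_ge
    linarith
  · have := lt_of_le_of_lt hf_le hGα
    linarith
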